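/- (Approximate Neyman orthogonality of the capped orthogonal loss.) Let S > 0. Suppose Y, T̆ : Ω → ℝ are random variables and r_o, t_o, t̆_o : E → ℝ are bounded measurable functions with E[Y | X] = r_o(X)·t_o(X) almost surely, E[T̆ | X] = t̆_o(X) almost surely, and |r_o(x)| ≤ S for all x ∈ E. Then for all square-integrable measurable functions r, 𝔯, t̆ : E → ℝ (with all expectations below finite), | E[ 2·(T̆ − t̆_o(X))·t̆_o(X)·(r(X) − r_o(X))·(𝔯(X) − r_o(X)) ] − E[ 2·(Y − t̆_o(X)·r_o(X))·(t̆(X) − t̆_o(X))·(r(X) − r_o(X)) ] | ≤ 2S·‖t_o − t̆_o‖_{L∞}·‖t̆ − t̆_o‖_{L²}·‖r − r_o‖_{L²}. -/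

import Mathlib

open MeasureTheory

/-- **Approximate Neyman orthogonality of the capped orthogonal loss.**
With `E[Y | X] = r_o(X) t_o(X)` a.s., `E[T̆ | X] = t̆_o(X)` a.s., and `|r_o| ≤ S`, the mixed
directional derivative of the capped orthogonal loss at the truth is bounded by
`2 S ‖t_o - t̆_o‖_{L∞} ‖t̆ - t̆_o‖_{L²} ‖r - r_o‖_{L²}`, where
`‖f‖_{L²} = (E[f(X)²])^{1/2}` and `‖f‖_{L∞} = ess sup |f(X)|`. -/
theorem approx_orthogonality_capped_loss
    {Ω : Type*} [MeasurableSpace Ω] {μ : Measure Ω} [IsProbabilityMeasure μ]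
    {E : Type*} [mE : MeasurableSpace E] (X : Ω → E) (hX : Measurable X)
    (S : ℝ) (hS : 0 < S)
    (Y T' : Ω → ℝ) (hY : Measurable Y) (hT' : Measurable T')
    (hYint : Integrable Y μ) (hT'int : Integrable T' μ)
    (r_o t_o t'_o : E → ℝ)
    (hro : Measurable r_o) (hto : Measurable t_o) (ht'o : Measurable t'_o)
    (hroB : ∀ x, |r_o x| ≤ S)
    (htoB : ∃ C, ∀ x, |t_o x| ≤ C) (ht'oB : ∃ C, ∀ x, |t'_o x| ≤ C)
    (hYcond : μ[Y | MeasurableSpace.comap X mE] =ᵐ[μ] fun ω => r_o (X ω) * t_o (X ω))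
    (hT'cond : μ[T' | MeasurableSpace.comap X mE] =ᵐ[μ] fun ω => t'_o (X ω))
    (r 𝔯 t' : E → ℝ) (hr : Measurable r) (h𝔯 : Measurable 𝔯) (ht' : Measurable t')
    (hr2 : Integrable (fun ω => (r (X ω)) ^ 2) μ)
    (h𝔯2 : Integrable (fun ω => (𝔯 (X ω)) ^ 2) μ)
    (ht'2 : Integrable (fun ω => (t' (X ω)) ^ 2) μ)
    (hint1 : Integrable (fun ω =>
      2 * (T' ω - t'_o (X ω)) * t'_o (X ω) * (r (X ω) - r_o (X ω)) * (𝔯 (X ω) - r_o (X ω))) μ)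
    (hint2 : Integrable (fun ω =>
      2 * (Y ω - t'_o (X ω) * r_o (X ω)) * (t' (X ω) - t'_o (X ω)) * (r (X ω) - r_o (X ω))) μ) :
    |(∫ ω, 2 * (T' ω - t'_o (X ω)) * t'_o (X ω) * (r (X ω) - r_o (X ω)) *
          (𝔯 (X ω) - r_o (X ω)) ∂μ) -
      ∫ ω, 2 * (Y ω - t'_o (X ω) * r_o (X ω)) * (t' (X ω) - t'_o (X ω)) *
          (r (X ω) - r_o (X ω)) ∂μ|
      ≤ 2 * S * (essSup (fun ω => (|t_o (X ω) - t'_o (X ω)| : ℝ)) μ) *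
        Real.sqrt (∫ ω, (t' (X ω) - t'_o (X ω)) ^ 2 ∂μ) *
        Real.sqrt (∫ ω, (r (X ω) - r_o (X ω)) ^ 2 ∂μ) := by
  obtain ⟨Ct, htoB⟩ := htoB
  obtain ⟨Ct', ht'oB⟩ := ht'oB
  have hm : MeasurableSpace.comap X mE ≤ _ := hX.comap_le
  have hXm : Measurable[MeasurableSpace.comap X mE] X := Measurable.of_comap_le le_rfl
  -- basic integrability of bounded compositions
  have ht'oX_int : Integrable (fun ω => t'_o (X ω)) μ :=
    Integrable.mono' (integrable_const Ct') ((ht'o.comp hX).aestronglyMeasurable)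
      (Filter.Eventually.of_forall fun ω => by
        simpa [Real.norm_eq_abs] using ht'oB (X ω))
  have hcr_int : Integrable (fun ω => t'_o (X ω) * r_o (X ω)) μ :=
    Integrable.mono' (integrable_const (Ct' * S)) (((ht'o.comp hX).mul (hro.comp hX)).aestronglyMeasurable)
      (Filter.Eventually.of_forall fun ω => by
        rw [Real.norm_eq_abs, abs_mul]
        exact mul_le_mul (ht'oB _) (hroB _) (abs_nonneg _)
          (le_trans (abs_nonneg _) (ht'oB (X ω))))
  -- Step 1: the first integral vanishes
  set G : Ω → ℝ := fun ω =>
    2 * t'_o (X ω) * (r (X ω) - r_o (X ω)) * (𝔯 (X ω) - r_o (X ω)) with hG_def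
  set g : Ω → ℝ := fun ω => T' ω - t'_o (X ω) with hg_def
  have hGm : StronglyMeasurable[MeasurableSpace.comap X mE] G :=
    Measurable.stronglyMeasurable
      (((measurable_const.mul (ht'o.comp hXm)).mul
        ((hr.comp hXm).sub (hro.comp hXm))).mul ((h𝔯.comp hXm).sub (hro.comp hXm)))
  have hg_int : Integrable g μ := hT'int.sub ht'oX_int
  have hGg_int : Integrable (G * g) μ :=
    hint1.congr (Filter.Eventually.of_forall fun ω => by
      simp only [Pi.mul_apply, hG_def, hg_def]; ring)
  have hpull1 : μ[G * g | MeasurableSpace.comap X mE] =ᵐ[μ] G * μ[g | MeasurableSpace.comap X mE] :=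
    condExp_mul_of_stronglyMeasurable_left hGm hGg_int hg_int
  have hgc : μ[g | MeasurableSpace.comap X mE] =ᵐ[μ] 0 := by
    have h1 : μ[g | MeasurableSpace.comap X mE] =ᵐ[μ] μ[T' | MeasurableSpace.comap X mE] - μ[(fun ω => t'_o (X ω)) | MeasurableSpace.comap X mE] :=
      condExp_sub hT'int ht'oX_int _
    have h2 : μ[(fun ω => t'_o (X ω)) | MeasurableSpace.comap X mE] = fun ω => t'_o (X ω) :=
      condExp_of_stronglyMeasurable hm ((ht'o.comp hXm).stronglyMeasurable) ht'oX_int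
    filter_upwards [h1, hT'cond] with ω hω h'ω
    simp only [Pi.sub_apply, h2, Pi.zero_apply] at hω ⊢
    rw [hω, h'ω]
    ring
  have hI1 : (∫ ω, 2 * (T' ω - t'_o (X ω)) * t'_o (X ω) * (r (X ω) - r_o (X ω)) *
      (𝔯 (X ω) - r_o (X ω)) ∂μ) = 0 := by
    calc (∫ ω, 2 * (T' ω - t'_o (X ω)) * t'_o (X ω) * (r (X ω) - r_o (X ω)) *
          (𝔯 (X ω) - r_o (X ω)) ∂μ)
        = ∫ ω, (G * g) ω ∂μ := integral_congr_ae (Filter.Eventually.of_forall fun ω => by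
          simp only [Pi.mul_apply, hG_def, hg_def]; ring)
      _ = ∫ ω, (μ[G * g | MeasurableSpace.comap X mE]) ω ∂μ := (integral_condExp hm).symm
      _ = ∫ ω, (0 : ℝ) ∂μ := by
          refine integral_congr_ae ?_
          filter_upwards [hpull1, hgc] with ω h1 h2
          simp [h1, Pi.mul_apply, h2]
      _ = 0 := integral_zero _ _
  -- Step 2: identify the second integral
  set H : Ω → ℝ := fun ω => 2 * (t' (X ω) - t'_o (X ω)) * (r (X ω) - r_o (X ω)) with hH_def
  set g2 : Ω → ℝ := fun ω => Y ω - t'_o (X ω) * r_o (X ω) with hg2_def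
  have hHm : StronglyMeasurable[MeasurableSpace.comap X mE] H :=
    Measurable.stronglyMeasurable
      ((measurable_const.mul ((ht'.comp hXm).sub (ht'o.comp hXm))).mul
        ((hr.comp hXm).sub (hro.comp hXm)))
  have hg2_int : Integrable g2 μ := hYint.sub hcr_int
  have hHg2_int : Integrable (H * g2) μ :=
    hint2.congr (Filter.Eventually.of_forall fun ω => by
      simp only [Pi.mul_apply, hH_def, hg2_def]; ring)
  have hpull2 : μ[H * g2 | MeasurableSpace.comap X mE] =ᵐ[μ] H * μ[g2 | MeasurableSpace.comap X mE] :=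
    condExp_mul_of_stronglyMeasurable_left hHm hHg2_int hg2_int
  have hg2c : μ[g2 | MeasurableSpace.comap X mE] =ᵐ[μ] fun ω => r_o (X ω) * (t_o (X ω) - t'_o (X ω)) := by
    have h1 : μ[g2 | MeasurableSpace.comap X mE] =ᵐ[μ] μ[Y | MeasurableSpace.comap X mE] - μ[(fun ω => t'_o (X ω) * r_o (X ω)) | MeasurableSpace.comap X mE] :=
      condExp_sub hYint hcr_int _
    have h2 : μ[(fun ω => t'_o (X ω) * r_o (X ω)) | MeasurableSpace.comap X mE] = fun ω => t'_o (X ω) * r_o (X ω) :=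
      condExp_of_stronglyMeasurable hm
        (((ht'o.comp hXm).mul (hro.comp hXm)).stronglyMeasurable) hcr_int
    filter_upwards [h1, hYcond] with ω hω h'ω
    simp only [Pi.sub_apply, h2] at hω
    rw [hω, h'ω]
    ring
  have hI2 : (∫ ω, 2 * (Y ω - t'_o (X ω) * r_o (X ω)) * (t' (X ω) - t'_o (X ω)) *
      (r (X ω) - r_o (X ω)) ∂μ)
      = ∫ ω, H ω * (r_o (X ω) * (t_o (X ω) - t'_o (X ω))) ∂μ := by
    calc (∫ ω, 2 * (Y ω - t'_o (X ω) * r_o (X ω)) * (t' (X ω) - t'_o (X ω)) *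
          (r (X ω) - r_o (X ω)) ∂μ)
        = ∫ ω, (H * g2) ω ∂μ := integral_congr_ae (Filter.Eventually.of_forall fun ω => by
          simp only [Pi.mul_apply, hH_def, hg2_def]; ring)
      _ = ∫ ω, (μ[H * g2 | MeasurableSpace.comap X mE]) ω ∂μ := (integral_condExp hm).symm
      _ = ∫ ω, H ω * (r_o (X ω) * (t_o (X ω) - t'_o (X ω))) ∂μ := by
          refine integral_congr_ae ?_
          filter_upwards [hpull2, hg2c] with ω h1 h2
          simp only [h1, Pi.mul_apply, h2]
  -- Step 3: bound
  set M : ℝ := essSup (fun ω => (|t_o (X ω) - t'_o (X ω)| : ℝ)) μ with hM_def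
  have hMae : ∀ᵐ ω ∂μ, |t_o (X ω) - t'_o (X ω)| ≤ M :=
    ae_le_essSup (Filter.isBoundedUnder_of ⟨Ct + Ct', fun ω =>
      (abs_sub _ _).trans (add_le_add (htoB _) (ht'oB _))⟩)
  haveI : (MeasureTheory.ae μ).NeBot := ae_neBot.mpr (IsProbabilityMeasure.ne_zero μ)
  have hM0 : 0 ≤ M := by
    obtain ⟨ω, hω⟩ := hMae.exists
    exact le_trans (abs_nonneg _) hω
  -- L² membership
  set a : Ω → ℝ := fun ω => t' (X ω) - t'_o (X ω) with ha_def
  set b : Ω → ℝ := fun ω => r (X ω) - r_o (X ω) with hb_def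
  have haL2 : MemLp a 2 μ := by
    have h1 : MemLp (fun ω => t' (X ω)) 2 μ :=
      (memLp_two_iff_integrable_sq (ht'.comp hX).aestronglyMeasurable).mpr ht'2
    have h2 : MemLp (fun ω => t'_o (X ω)) 2 μ :=
      MemLp.of_bound (ht'o.comp hX).aestronglyMeasurable Ct'
        (Filter.Eventually.of_forall fun ω => by
          simpa [Real.norm_eq_abs] using ht'oB (X ω))
    exact h1.sub h2
  have hbL2 : MemLp b 2 μ := by
    have h1 : MemLp (fun ω => r (X ω)) 2 μ :=
      (memLp_two_iff_integrable_sq (hr.comp hX).aestronglyMeasurable).mpr hr2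
    have h2 : MemLp (fun ω => r_o (X ω)) 2 μ :=
      MemLp.of_bound (hro.comp hX).aestronglyMeasurable S
        (Filter.Eventually.of_forall fun ω => by
          simpa [Real.norm_eq_abs] using hroB (X ω))
    exact h1.sub h2
  have ha2 : Integrable (fun ω => a ω ^ 2) μ := haL2.integrable_sq
  have hb2 : Integrable (fun ω => b ω ^ 2) μ := hbL2.integrable_sq
  have hab_meas : AEStronglyMeasurable (fun ω => |a ω| * |b ω|) μ := by
    refine AEStronglyMeasurable.mul ?_ ?_
    · exact (Measurable.abs ((ht'.comp hX).sub (ht'o.comp hX))).aestronglyMeasurable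
    · exact (Measurable.abs ((hr.comp hX).sub (hro.comp hX))).aestronglyMeasurable
  clear_value a b
  have hdom : Integrable (fun ω => (a ω ^ 2 + b ω ^ 2) / 2) μ := (ha2.add hb2).div_const 2
  have hab_int : Integrable (fun ω => |a ω| * |b ω|) μ := by
    refine Integrable.mono' hdom hab_meas (Filter.Eventually.of_forall fun ω => ?_)
    show ‖|a ω| * |b ω|‖ ≤ (a ω ^ 2 + b ω ^ 2) / 2
    rw [Real.norm_eq_abs, abs_of_nonneg (mul_nonneg (abs_nonneg _) (abs_nonneg _))]
    have h2 := two_mul_le_add_sq |a ω| |b ω|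
    rw [sq_abs, sq_abs] at h2
    linarith
  -- Cauchy–Schwarz
  have hCS : (∫ ω, |a ω| * |b ω| ∂μ) ≤
      Real.sqrt (∫ ω, a ω ^ 2 ∂μ) * Real.sqrt (∫ ω, b ω ^ 2 ∂μ) := by
    have hconj : Real.HolderConjugate 2 2 := ⟨by norm_num, by norm_num, by norm_num⟩
    have h2 : (ENNReal.ofReal 2) = 2 := by
      rw [ENNReal.ofReal_ofNat]
    have hcs := integral_mul_norm_le_Lp_mul_Lq hconj (h2 ▸ haL2) (h2 ▸ hbL2)
    simp only [Real.norm_eq_abs] at hcs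
    have e1 : ∀ (f : Ω → ℝ), (∫ ω, |f ω| ^ (2:ℝ) ∂μ) = ∫ ω, f ω ^ 2 ∂μ := by
      intro f
      refine integral_congr_ae (Filter.Eventually.of_forall fun ω => ?_)
      show |f ω| ^ (2:ℝ) = f ω ^ 2
      rw [show ((2:ℝ) = ((2:ℕ):ℝ)) by norm_num, Real.rpow_natCast, sq_abs]
    rw [e1, e1] at hcs
    have hsq : ∀ (f : Ω → ℝ), Integrable (fun ω => f ω ^ 2) μ →
        (∫ ω, f ω ^ 2 ∂μ) ^ ((1:ℝ)/2) = Real.sqrt (∫ ω, f ω ^ 2 ∂μ) := by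
      intro f hf
      rw [Real.sqrt_eq_rpow]
    rw [hsq a ha2, hsq b hb2] at hcs
    exact hcs
  -- assemble
  rw [hI1, hI2, zero_sub, abs_neg]
  calc |∫ ω, H ω * (r_o (X ω) * (t_o (X ω) - t'_o (X ω))) ∂μ|
      ≤ ∫ ω, |H ω * (r_o (X ω) * (t_o (X ω) - t'_o (X ω)))| ∂μ := by
        simpa only [Real.norm_eq_abs] using
          norm_integral_le_integral_norm (μ := μ)
            (fun ω => H ω * (r_o (X ω) * (t_o (X ω) - t'_o (X ω))))
    _ ≤ ∫ ω, 2 * S * M * (|a ω| * |b ω|) ∂μ := by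
        refine integral_mono_of_nonneg
          (Filter.Eventually.of_forall fun ω => abs_nonneg _)
          ((hab_int.const_mul (2 * S * M))) ?_
        filter_upwards [hMae] with ω hω
        have e : |H ω * (r_o (X ω) * (t_o (X ω) - t'_o (X ω)))|
            = 2 * (|a ω| * |b ω|) * (|r_o (X ω)| * |t_o (X ω) - t'_o (X ω)|) := by
          simp only [hH_def, ha_def, hb_def, abs_mul, abs_two]
          ring
        rw [e]
        calc 2 * (|a ω| * |b ω|) * (|r_o (X ω)| * |t_o (X ω) - t'_o (X ω)|)
            ≤ 2 * (|a ω| * |b ω|) * (S * M) := by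
              refine mul_le_mul_of_nonneg_left
                (mul_le_mul (hroB _) hω (abs_nonneg _) hS.le)
                (by positivity)
          _ = 2 * S * M * (|a ω| * |b ω|) := by ring
    _ = 2 * S * M * ∫ ω, |a ω| * |b ω| ∂μ := integral_const_mul _ _
    _ ≤ 2 * S * M * (Real.sqrt (∫ ω, a ω ^ 2 ∂μ) * Real.sqrt (∫ ω, b ω ^ 2 ∂μ)) := by
        refine mul_le_mul_of_nonneg_left hCS (by positivity)
    _ = 2 * S * M * Real.sqrt (∫ ω, a ω ^ 2 ∂μ) * Real.sqrt (∫ ω, b ω ^ 2 ∂μ) := by ring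
    _ = 2 * S * M * Real.sqrt (∫ ω, (t' (X ω) - t'_o (X ω)) ^ 2 ∂μ) *
        Real.sqrt (∫ ω, (r (X ω) - r_o (X ω)) ^ 2 ∂μ) := by simp only [ha_def, hb_def]
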